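/- Let Θ be a nonempty Polish space and let E : P(Θ) → ℝ be continuous with respect to the topology of weak convergence, with a unique global minimizer ρ* over P(Θ). Suppose that for every K ∈ ℕ there exists ρ^K ∈ P_em^K(Θ) minimizing E over P_em^K(Θ). Let d : P(Θ) × P(Θ) → ℝ be any nonnegative function satisfying the Łojasiewicz-type inequality d(ν, ρ*) ≤ C·|E(ν) − E(ρ*)|^α for all ν ∈ P(Θ), for some constants C > 0 and α > 0. Then d(ρ^K, ρ*) → 0 as K → ∞. -/

import Mathlib

open Filter Topology MeasureTheory

/-- The set of uniform empirical probability measures on `K` (not necessarily distinct)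
points of `Θ`, i.e. measures of the form `(1/K) ∑_{k=1}^K δ_{θ_k}`. -/
def PemK {Θ : Type*} [MeasurableSpace Θ] (K : ℕ) : Set (ProbabilityMeasure Θ) :=
  {ρ | ∃ θs : Fin K → Θ,
    (ρ : Measure Θ) = (K : ENNReal)⁻¹ • ∑ k : Fin K, Measure.dirac (θs k)}

section Aux

open Metric Set ENNReal

private lemma list_fin_sum {α M : Type*} [AddCommMonoid M] (l : List α) (f : α → M) :
    ∑ i : Fin l.length, f (l.get i) = (l.map f).sum := by
  induction l with
  | nil => simp
  | cons x xs ih => simp [Fin.sum_univ_succ, ih]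

private lemma list_range_sum {M : Type*} [AddCommMonoid M] (N : ℕ) (f : ℕ → M) :
    ((List.range N).map f).sum = ∑ n ∈ Finset.range N, f n := by
  induction N with
  | zero => simp
  | succ n ih => simp [List.range_succ, Finset.sum_range_succ, ih]

private lemma exists_pem_close {Θ : Type*} [MeasurableSpace Θ] [MetricSpace Θ]
    [TopologicalSpace.SeparableSpace Θ] [BorelSpace Θ] [Nonempty Θ]
    (ρ : ProbabilityMeasure Θ) {ε : ℝ} (hε : 0 < ε) :
    ∃ K₀ : ℕ, 1 ≤ K₀ ∧ ∀ K, K₀ ≤ K → ∃ ν : ProbabilityMeasure Θ, ν ∈ PemK K ∧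
      levyProkhorovEDist (ν : Measure Θ) (ρ : Measure Θ) ≤ ENNReal.ofReal (2 * ε) := by
  classical
  obtain ⟨As, As_mble, As_bdd, As_diam, As_cover, As_disj⟩ :=
    SeparableSpace.exists_measurable_partition_diam_le Θ hε
  -- choose a finite part of the partition carrying almost all the mass of ρ
  obtain ⟨N, hN⟩ : ∃ N, (ρ : Measure Θ) (⋃ j ∈ Finset.range N, As j)ᶜ < ENNReal.ofReal ε := by
    have exhaust := tendsto_measure_biUnion_Ici_zero_of_pairwise_disjoint
      (μ := (ρ : Measure Θ)) (fun n ↦ (As_mble n).nullMeasurableSet) As_disj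
    simp only [tendsto_atTop_nhds, Function.comp_apply] at exhaust
    obtain ⟨N, hN⟩ := exhaust (Set.Iio (ENNReal.ofReal ε))
      (by simpa using ENNReal.ofReal_pos.mpr hε) isOpen_Iio
    refine ⟨N, ?_⟩
    have rewr : ⋃ i, ⋃ (_ : N ≤ i), As i = (⋃ i, ⋃ (_ : i < N), As i)ᶜ := by
      simpa only [mem_Iio, compl_Iio, mem_Ici] using
        (biUnion_compl_eq_of_pairwise_disjoint_of_iUnion_eq_univ As_cover As_disj (Iio N)).symm
    have hNN := hN N le_rfl
    rw [rewr] at hNN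
    have congrU : (⋃ j ∈ Finset.range N, As j) = ⋃ i, ⋃ (_ : i < N), As i := by
      ext x; simp [Finset.mem_range]
    rw [congrU]
    simpa using hNN
  -- choose points
  set a : ℕ → Θ := fun n => if h : (As n).Nonempty then h.choose else Classical.arbitrary Θ
    with ha_def
  have ha : ∀ n, (As n).Nonempty → a n ∈ As n := by
    intro n h
    simp only [ha_def, dif_pos h]
    exact h.choose_spec
  refine ⟨max 1 ⌈(N : ℝ) / ε⌉₊, le_max_left _ _, ?_⟩
  intro K hK
  have hK1 : 1 ≤ K := le_trans (le_max_left _ _) hK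
  have hKpos : (0:ℝ) < K := by exact_mod_cast hK1
  have hKne : (K : ℝ≥0∞) ≠ 0 := by
    simp only [ne_eq, Nat.cast_eq_zero]; omega
  have hKnetop : (K : ℝ≥0∞) ≠ ∞ := ENNReal.natCast_ne_top K
  have hNK : (N : ℝ) ≤ ε * K := by
    have h1 : (⌈(N : ℝ) / ε⌉₊ : ℝ) ≤ K := by exact_mod_cast le_trans (le_max_right _ _) hK
    have h2 : (N : ℝ) / ε ≤ K := le_trans (Nat.le_ceil _) h1
    rw [div_le_iff₀ hε] at h2
    linarith [h2]
  have hNKe : (N : ℝ≥0∞) / (K : ℝ≥0∞) ≤ ENNReal.ofReal ε := by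
    have hdiv : (N : ℝ) / K ≤ ε := by
      rw [div_le_iff₀ hKpos]; linarith
    calc (N : ℝ≥0∞) / (K : ℝ≥0∞) = ENNReal.ofReal ((N : ℝ) / K) := by
          rw [ENNReal.ofReal_div_of_pos hKpos, ENNReal.ofReal_natCast, ENNReal.ofReal_natCast]
      _ ≤ ENNReal.ofReal ε := ENNReal.ofReal_le_ofReal hdiv
  -- counts
  set p : ℕ → ℝ≥0∞ := fun n => (ρ : Measure Θ) (As n) with hp
  set c : ℕ → ℕ := fun n => ⌊(K : ℝ) * (p n).toReal⌋₊ with hc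
  have hpc : ∀ n, p n ≤ ((c n : ℝ≥0∞) + 1) / K := by
    intro n
    have h1 : (K : ℝ) * (p n).toReal < (c n : ℝ) + 1 := by
      simpa using Nat.lt_floor_add_one ((K : ℝ) * (p n).toReal)
    have h2 : (p n).toReal ≤ ((c n : ℝ) + 1) / K := by
      rw [le_div_iff₀ hKpos]
      nlinarith [h1]
    have h3 : p n = ENNReal.ofReal (p n).toReal :=
      (ENNReal.ofReal_toReal (measure_ne_top _ _)).symm
    rw [h3]
    calc ENNReal.ofReal (p n).toReal ≤ ENNReal.ofReal (((c n : ℝ) + 1) / K) :=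
          ENNReal.ofReal_le_ofReal h2
      _ = ((c n : ℝ≥0∞) + 1) / K := by
          rw [ENNReal.ofReal_div_of_pos hKpos, ENNReal.ofReal_add (by positivity) zero_le_one]
          simp [ENNReal.ofReal_natCast]
  set S : ℕ := ∑ n ∈ Finset.range N, c n with hS
  have hSK : S ≤ K := by
    have hdisj : (↑(Finset.range N) : Set ℕ).PairwiseDisjoint As :=
      fun i _ j _ hij => As_disj hij
    have hU : (∑ n ∈ Finset.range N, p n) = (ρ : Measure Θ) (⋃ n ∈ Finset.range N, As n) :=
      (measure_biUnion_finset hdisj fun n _ => As_mble n).symm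
    have hpsum : ∑ n ∈ Finset.range N, (p n).toReal ≤ 1 := by
      rw [← ENNReal.toReal_sum (fun n _ => measure_ne_top _ _), hU]
      exact ENNReal.toReal_le_of_le_ofReal zero_le_one (by simpa using prob_le_one)
    have hcast : (S : ℝ) ≤ (K : ℝ) := by
      rw [hS]
      push_cast
      calc ∑ n ∈ Finset.range N, (c n : ℝ)
          ≤ ∑ n ∈ Finset.range N, (K : ℝ) * (p n).toReal := by
            apply Finset.sum_le_sum
            intro n _
            exact Nat.floor_le (by positivity)
        _ = (K : ℝ) * ∑ n ∈ Finset.range N, (p n).toReal := by rw [Finset.mul_sum]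
        _ ≤ (K : ℝ) * 1 := by
            apply mul_le_mul_of_nonneg_left hpsum (by positivity)
        _ = K := mul_one _
    exact_mod_cast hcast
  set r : ℕ := K - S with hr
  have hrS : S + r = K := Nat.add_sub_cancel' hSK
  -- the list of points
  set x₀ : Θ := Classical.arbitrary Θ with hx₀
  set l : List Θ :=
    ((List.range N).flatMap fun n => List.replicate (c n) (a n)) ++ List.replicate r x₀ with hl
  have hlen : l.length = K := by
    rw [hl, List.length_append, List.length_replicate, List.length_flatMap]
    have : (List.map (fun n => (List.replicate (c n) (a n)).length) (List.range N))
        = (List.range N).map c := by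
      simp [Function.comp_def]
    rw [this, list_range_sum, ← hS, hrS]
  set θs : Fin K → Θ := fun i => l.get (Fin.cast hlen.symm i) with hθs
  have key : ∑ k : Fin K, Measure.dirac (θs k)
      = (∑ n ∈ Finset.range N, (c n) • Measure.dirac (a n)) + r • Measure.dirac x₀ := by
    have h1 : ∑ k : Fin K, Measure.dirac (θs k)
        = ∑ i : Fin l.length, Measure.dirac (l.get i) :=
      Fin.sum_congr' (fun i => Measure.dirac (l.get i)) hlen.symm
    rw [h1, list_fin_sum l Measure.dirac, hl, List.map_append, List.sum_append]
    congr 1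
    · rw [List.map_flatMap]
      rw [List.flatMap_def, List.sum_flatten, List.map_map]
      have : (List.map (List.sum ∘ fun a_1 => List.map Measure.dirac
          (List.replicate (c a_1) (a a_1))) (List.range N))
          = (List.range N).map (fun n => (c n) • Measure.dirac (a n)) := by
        simp [Function.comp_def]
      rw [this, list_range_sum]
    · simp
  have huniv : (∑ k : Fin K, Measure.dirac (θs k)) Set.univ = K := by
    rw [Measure.finset_sum_apply]
    simp
  set νm : Measure Θ := (K : ℝ≥0∞)⁻¹ • ∑ k : Fin K, Measure.dirac (θs k) with hνm
  have hνprob : IsProbabilityMeasure νm := by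
    constructor
    rw [hνm, Measure.smul_apply, huniv, smul_eq_mul, ENNReal.inv_mul_cancel hKne hKnetop]
  refine ⟨⟨νm, hνprob⟩, ⟨θs, hνm⟩, ?_⟩
  -- the Lévy-Prokhorov bound
  show levyProkhorovEDist νm (ρ : Measure Θ) ≤ ENNReal.ofReal (2 * ε)
  rw [levyProkhorovEDist_comm]
  haveI : IsProbabilityMeasure (ρ : Measure Θ) := ρ.2
  apply levyProkhorovEDist_le_of_forall_le
  intro ε' B hlt hfin B_mble
  set η := ε'.toReal with hη
  have hεη : ε < η := by
    have h2 : 2 * ε ≤ η := by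
      have := ENNReal.toReal_mono hfin.ne hlt.le
      rwa [ENNReal.toReal_ofReal (by positivity)] at this
    linarith
  set T := Metric.thickening η B with hT
  have T_mble : MeasurableSet T := Metric.isOpen_thickening.measurableSet
  set U := ⋃ j ∈ Finset.range N, As j with hU
  set J := (Finset.range N).filter (fun n => (B ∩ As n).Nonempty) with hJ
  have haT : ∀ n ∈ J, a n ∈ T := by
    intro n hn
    rw [hJ, Finset.mem_filter] at hn
    obtain ⟨b, hbB, hbA⟩ := hn.2
    have hanA : a n ∈ As n := ha n ⟨b, hbA⟩
    rw [hT, Metric.mem_thickening_iff]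
    exact ⟨b, hbB,
      lt_of_le_of_lt (le_trans (Metric.dist_le_diam_of_mem (As_bdd n) hanA hbA) (As_diam n)) hεη⟩
  -- core estimate
  have hcore : (∑ n ∈ J, (c n : ℝ≥0∞)) * (K : ℝ≥0∞)⁻¹ ≤ νm T := by
    have hsum_T : (∑ n ∈ J, (c n : ℝ≥0∞)) ≤ (∑ k : Fin K, Measure.dirac (θs k)) T := by
      rw [key, Measure.add_apply, Measure.finset_sum_apply]
      have step1 : ∑ n ∈ J, (c n : ℝ≥0∞) = ∑ n ∈ J, ((c n) • Measure.dirac (a n)) T := by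
        apply Finset.sum_congr rfl
        intro n hn
        rw [Measure.smul_apply, Measure.dirac_apply' _ T_mble,
          Set.indicator_of_mem (haT n hn)]
        simp
      rw [step1]
      refine le_trans (Finset.sum_le_sum_of_subset (by rw [hJ]; exact Finset.filter_subset _ _))
        (le_self_add)
    calc (∑ n ∈ J, (c n : ℝ≥0∞)) * (K : ℝ≥0∞)⁻¹
        ≤ ((∑ k : Fin K, Measure.dirac (θs k)) T) * (K : ℝ≥0∞)⁻¹ :=
          mul_le_mul_left hsum_T _
      _ = νm T := by rw [hνm, Measure.smul_apply, smul_eq_mul, mul_comm]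
  -- main chain
  have main : (ρ : Measure Θ) B ≤ νm T + ((N : ℝ≥0∞) / K + ENNReal.ofReal ε) := by
    have step1 : (ρ : Measure Θ) B ≤ (ρ : Measure Θ) (B ∩ U) + (ρ : Measure Θ) (B \ U) :=
      measure_le_inter_add_diff _ B U
    have step2 : (ρ : Measure Θ) (B \ U) ≤ ENNReal.ofReal ε :=
      le_trans (measure_mono fun x hx => hx.2) hN.le
    have step3 : (ρ : Measure Θ) (B ∩ U) ≤ ∑ n ∈ Finset.range N, (ρ : Measure Θ) (B ∩ As n) := by
      have : B ∩ U = ⋃ n ∈ Finset.range N, (B ∩ As n) := by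
        rw [hU, Set.inter_iUnion₂]
      rw [this]
      exact measure_biUnion_finset_le _ _
    have step4 : ∑ n ∈ Finset.range N, (ρ : Measure Θ) (B ∩ As n)
        = ∑ n ∈ J, (ρ : Measure Θ) (B ∩ As n) := by
      symm
      apply Finset.sum_subset (by rw [hJ]; exact Finset.filter_subset _ _)
      intro n hn hnJ
      rw [hJ] at hnJ
      have hnon : ¬ (B ∩ As n).Nonempty := by
        intro hne
        exact hnJ (Finset.mem_filter.mpr ⟨hn, hne⟩)
      rw [Set.not_nonempty_iff_eq_empty.mp hnon, measure_empty]
    have step5 : ∑ n ∈ J, (ρ : Measure Θ) (B ∩ As n)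
        ≤ ∑ n ∈ J, ((c n : ℝ≥0∞) + 1) * (K : ℝ≥0∞)⁻¹ := by
      apply Finset.sum_le_sum
      intro n _
      calc (ρ : Measure Θ) (B ∩ As n) ≤ p n := measure_mono Set.inter_subset_right
        _ ≤ ((c n : ℝ≥0∞) + 1) / K := hpc n
        _ = ((c n : ℝ≥0∞) + 1) * (K : ℝ≥0∞)⁻¹ := by rw [ENNReal.div_eq_inv_mul, mul_comm]
    have step6 : ∑ n ∈ J, ((c n : ℝ≥0∞) + 1) * (K : ℝ≥0∞)⁻¹
        ≤ νm T + (N : ℝ≥0∞) / K := by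
      rw [← Finset.sum_mul, Finset.sum_add_distrib, Finset.sum_const, add_mul]
      have hcard : ((J.card : ℝ≥0∞) * 1) * (K : ℝ≥0∞)⁻¹ ≤ (N : ℝ≥0∞) / K := by
        rw [mul_one, ← div_eq_mul_inv]
        have hJN : J.card ≤ N := le_trans (Finset.card_filter_le _ _) (le_of_eq (Finset.card_range N))
        exact ENNReal.div_le_div_right (by exact_mod_cast hJN) _
      have hsmul : (J.card • (1 : ℝ≥0∞)) * (K : ℝ≥0∞)⁻¹ = ((J.card : ℝ≥0∞) * 1) * (K : ℝ≥0∞)⁻¹ := by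
        rw [nsmul_eq_mul]
      rw [hsmul]
      exact add_le_add hcore hcard
    calc (ρ : Measure Θ) B
        ≤ (ρ : Measure Θ) (B ∩ U) + (ρ : Measure Θ) (B \ U) := step1
      _ ≤ (∑ n ∈ Finset.range N, (ρ : Measure Θ) (B ∩ As n)) + ENNReal.ofReal ε :=
          add_le_add step3 step2
      _ = (∑ n ∈ J, (ρ : Measure Θ) (B ∩ As n)) + ENNReal.ofReal ε := by rw [step4]
      _ ≤ (∑ n ∈ J, ((c n : ℝ≥0∞) + 1) * (K : ℝ≥0∞)⁻¹) + ENNReal.ofReal ε :=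
          add_le_add_left step5 _
      _ ≤ (νm T + (N : ℝ≥0∞) / K) + ENNReal.ofReal ε := add_le_add_left step6 _
      _ = νm T + ((N : ℝ≥0∞) / K + ENNReal.ofReal ε) := by rw [add_assoc]
  refine le_trans main (add_le_add_right ?_ _)
  calc (N : ℝ≥0∞) / K + ENNReal.ofReal ε
      ≤ ENNReal.ofReal ε + ENNReal.ofReal ε := add_le_add_left hNKe _
    _ = ENNReal.ofReal (2 * ε) := by rw [← ENNReal.ofReal_add hε.le hε.le]; ring_nf
    _ ≤ ε' := hlt.le

end Aux

/-- If `E` is continuous (weak topology) with a unique global minimizer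
`ρ*`, minimizers `ρ^K` over `K`-particle empirical measures exist, and `d` satisfies a
Łojasiewicz-type inequality at `ρ*`, then `d(ρ^K, ρ*) → 0`. -/
theorem stmt_5 {Θ : Type*} [TopologicalSpace Θ] [PolishSpace Θ]
    [MeasurableSpace Θ] [BorelSpace Θ] [Nonempty Θ]
    (E : ProbabilityMeasure Θ → ℝ) (hE : Continuous E)
    (ρstar : ProbabilityMeasure Θ)
    (hmin : ∀ ν : ProbabilityMeasure Θ, E ρstar ≤ E ν)
    (huniq : ∀ ν : ProbabilityMeasure Θ, E ν = E ρstar → ν = ρstar)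
    (ρK : ℕ → ProbabilityMeasure Θ)
    (hρK : ∀ K : ℕ, 1 ≤ K → ρK K ∈ PemK K ∧ ∀ ν ∈ PemK (Θ := Θ) K, E (ρK K) ≤ E ν)
    (d : ProbabilityMeasure Θ × ProbabilityMeasure Θ → ℝ)
    (hd0 : ∀ p, 0 ≤ d p)
    (C α : ℝ) (hC : 0 < C) (hα : 0 < α)
    (hLoj : ∀ ν : ProbabilityMeasure Θ, d (ν, ρstar) ≤ C * |E ν - E ρstar| ^ α) :
    Tendsto (fun K => d (ρK K, ρstar)) atTop (𝓝 0) := by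
  letI := TopologicalSpace.upgradeIsCompletelyMetrizable Θ
  -- Step 0: for every neighborhood of ρstar, large-K empirical measures enter it
  have key : ∀ U ∈ 𝓝 ρstar, ∃ K₀ : ℕ, 1 ≤ K₀ ∧ ∀ K, K₀ ≤ K →
      ∃ ν ∈ PemK (Θ := Θ) K, ν ∈ U := by
    intro U hU
    have hcont := MeasureTheory.LevyProkhorov.continuous_toMeasure_probabilityMeasure (Ω := Θ)
    have hU' : (MeasureTheory.LevyProkhorov.toMeasure (α := ProbabilityMeasure Θ)) ⁻¹' U
        ∈ 𝓝 (MeasureTheory.LevyProkhorov.ofMeasure ρstar) :=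
      (hcont.continuousAt).preimage_mem_nhds hU
    obtain ⟨δ, hδpos, hball⟩ := Metric.mem_nhds_iff.mp hU'
    obtain ⟨K₀, hK₀1, hK₀⟩ := exists_pem_close ρstar (show (0:ℝ) < δ/5 by linarith)
    refine ⟨K₀, hK₀1, fun K hK => ?_⟩
    obtain ⟨ν, hνmem, hνd⟩ := hK₀ K hK
    refine ⟨ν, hνmem, ?_⟩
    have h1 : (levyProkhorovEDist (ν : Measure Θ) (ρstar : Measure Θ)).toReal ≤ 2 * (δ/5) := by
      have h2 := ENNReal.toReal_mono ENNReal.ofReal_ne_top hνd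
      rwa [ENNReal.toReal_ofReal (by positivity)] at h2
    have hdist : MeasureTheory.LevyProkhorov.ofMeasure ν
        ∈ Metric.ball (MeasureTheory.LevyProkhorov.ofMeasure ρstar) δ := by
      rw [Metric.mem_ball, MeasureTheory.LevyProkhorov.dist_probabilityMeasure_def]
      exact lt_of_le_of_lt h1 (by linarith)
    exact hball hdist
  -- Step 1: E (ρK K) → E ρstar
  have hEtend : Tendsto (fun K => E (ρK K)) atTop (𝓝 (E ρstar)) := by
    rw [Metric.tendsto_atTop]
    intro ε hε
    have hU : E ⁻¹' Metric.ball (E ρstar) ε ∈ 𝓝 ρstar :=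
      hE.continuousAt.preimage_mem_nhds (Metric.ball_mem_nhds _ hε)
    obtain ⟨K₀, hK₀1, hK₀⟩ := key _ hU
    refine ⟨K₀, fun K hK => ?_⟩
    obtain ⟨ν, hνmem, hνU⟩ := hK₀ K hK
    have h1 : E (ρK K) ≤ E ν := (hρK K (le_trans hK₀1 hK)).2 ν hνmem
    have h2 : E ρstar ≤ E (ρK K) := hmin _
    have h3 : |E ν - E ρstar| < ε := by
      have := Metric.mem_ball.mp hνU
      rwa [Real.dist_eq] at this
    rw [Real.dist_eq, abs_lt]
    rcases abs_lt.mp h3 with ⟨h3a, h3b⟩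
    constructor <;> linarith
  -- Step 2: squeeze d to zero
  have habs : Tendsto (fun K => |E (ρK K) - E ρstar|) atTop (𝓝 0) := by
    have h := hEtend.sub_const (E ρstar)
    rw [sub_self] at h
    simpa using h.abs
  have hpow : Tendsto (fun K => C * |E (ρK K) - E ρstar| ^ α) atTop (𝓝 0) := by
    have hc : ContinuousAt (fun x : ℝ => x ^ α) 0 :=
      Real.continuousAt_rpow_const 0 α (Or.inr hα.le)
    have h2 := hc.tendsto.comp habs
    rw [Real.zero_rpow hα.ne'] at h2
    simpa using h2.const_mul C
  exact squeeze_zero (fun K => hd0 _) (fun K => hLoj (ρK K)) hpow
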